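/- The diameter of the graph D_k(S_a, S_b) (i.e., the maximum of d(u,v) over all pairs of vertices u, v) is at least 5 if and only if there exists an index 0 ≤ i ≤ k−1 with S_a(i) = 1 and S_b(i) = 1; equivalently, if for every i either S_a(i) = 0 or S_b(i) = 0, then d(u,v) ≤ 4 for all vertices u, v. -/

import Mathlib

/-!
Statement 4: The diameter of the graph `D_k(S_a, S_b)` (i.e. the maximum of
`d(u,v)` over all pairs of vertices) is at least 5 iff there is an index `i`
with `S_a(i) = 1` and `S_b(i) = 1`; equivalently, if for every `i` either
`S_a(i) = 0` or `S_b(i) = 0`, then `d(u,v) ≤ 4` for all vertices `u, v`.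
-/


namespace DiamGadget

/-- Vertices of the diameter gadget graph `D_k`, `k = 2^m`. -/
inductive V (m : ℕ) : Type
  | L : Fin (2 ^ m) → V m
  | R : Fin (2 ^ m) → V m
  | lk : V m
  | lk1 : V m
  | rk : V m
  | rk1 : V m
  | F : Fin m → V m
  | T : Fin m → V m
  | F' : Fin m → V m
  | T' : Fin m → V m
  | a : V m
  | b : V m

open V

/-- One direction of the edge relation of `D_k`. -/
def rel (m : ℕ) : V m → V m → Prop
  | L _, lk => True
  | R _, rk => True
  | lk, lk1 => True
  | rk, rk1 => True
  | lk1, rk1 => True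
  | F j, T' j' => j = j'
  | T j, F' j' => j = j'
  | L i, F j => Nat.testBit i.val j.val = false
  | L i, T j => Nat.testBit i.val j.val = true
  | R i, F' j => Nat.testBit i.val j.val = false
  | R i, T' j => Nat.testBit i.val j.val = true
  | a, F _ => True
  | a, T _ => True
  | a, lk => True
  | a, lk1 => True
  | b, F' _ => True
  | b, T' _ => True
  | b, rk => True
  | b, rk1 => True
  | a, b => True
  | _, _ => False

/-- The diameter gadget graph `D_k`. -/
def G (m : ℕ) : SimpleGraph (V m) := SimpleGraph.fromRel (rel m)

/-- Extra edges depending on the input strings: `ℓ_i–ℓ_{k+1}` when `S_a(i) = 0`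
and `r_i–r_{k+1}` when `S_b(i) = 0`. -/
def extraRel (m : ℕ) (Sa Sb : Fin (2 ^ m) → Bool) : V m → V m → Prop
  | L i, lk1 => Sa i = false
  | R i, rk1 => Sb i = false
  | _, _ => False

/-- The graph `D_k(S_a, S_b)`. -/
def GS (m : ℕ) (Sa Sb : Fin (2 ^ m) → Bool) : SimpleGraph (V m) :=
  G m ⊔ SimpleGraph.fromRel (extraRel m Sa Sb)

section Aux

variable {m : ℕ} {Sa Sb : Fin (2 ^ m) → Bool}

lemma adjR {u v : V m} (hne : u ≠ v) (h : rel m u v) : (GS m Sa Sb).Adj u v := by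
  simp only [GS, G, SimpleGraph.sup_adj, SimpleGraph.fromRel_adj]
  exact Or.inl ⟨hne, Or.inl h⟩

lemma adjE {u v : V m} (hne : u ≠ v) (h : extraRel m Sa Sb u v) : (GS m Sa Sb).Adj u v := by
  simp only [GS, G, SimpleGraph.sup_adj, SimpleGraph.fromRel_adj]
  exact Or.inr ⟨hne, Or.inl h⟩

-- basic adjacencies
lemma adj_ab : (GS m Sa Sb).Adj V.a V.b := adjR (by simp) trivial
lemma adj_aF (j : Fin m) : (GS m Sa Sb).Adj V.a (V.F j) := adjR (by simp) trivial
lemma adj_aT (j : Fin m) : (GS m Sa Sb).Adj V.a (V.T j) := adjR (by simp) trivial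
lemma adj_alk : (GS m Sa Sb).Adj V.a V.lk := adjR (by simp) trivial
lemma adj_alk1 : (GS m Sa Sb).Adj V.a V.lk1 := adjR (by simp) trivial
lemma adj_bF' (j : Fin m) : (GS m Sa Sb).Adj V.b (V.F' j) := adjR (by simp) trivial
lemma adj_bT' (j : Fin m) : (GS m Sa Sb).Adj V.b (V.T' j) := adjR (by simp) trivial
lemma adj_brk : (GS m Sa Sb).Adj V.b V.rk := adjR (by simp) trivial
lemma adj_brk1 : (GS m Sa Sb).Adj V.b V.rk1 := adjR (by simp) trivial
lemma adj_Llk (i : Fin (2 ^ m)) : (GS m Sa Sb).Adj (V.L i) V.lk := adjR (by simp) trivial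
lemma adj_Rrk (i : Fin (2 ^ m)) : (GS m Sa Sb).Adj (V.R i) V.rk := adjR (by simp) trivial
lemma adj_lklk1 : (GS m Sa Sb).Adj V.lk V.lk1 := adjR (by simp) trivial
lemma adj_rkrk1 : (GS m Sa Sb).Adj V.rk V.rk1 := adjR (by simp) trivial
lemma adj_lk1rk1 : (GS m Sa Sb).Adj V.lk1 V.rk1 := adjR (by simp) trivial
lemma adj_FT' (j : Fin m) : (GS m Sa Sb).Adj (V.F j) (V.T' j) := adjR (by simp) rfl
lemma adj_TF' (j : Fin m) : (GS m Sa Sb).Adj (V.T j) (V.F' j) := adjR (by simp) rfl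
lemma adj_LF {i : Fin (2 ^ m)} {j : Fin m} (h : Nat.testBit i.val j.val = false) :
    (GS m Sa Sb).Adj (V.L i) (V.F j) := adjR (by simp) h
lemma adj_LT {i : Fin (2 ^ m)} {j : Fin m} (h : Nat.testBit i.val j.val = true) :
    (GS m Sa Sb).Adj (V.L i) (V.T j) := adjR (by simp) h
lemma adj_RF' {i : Fin (2 ^ m)} {j : Fin m} (h : Nat.testBit i.val j.val = false) :
    (GS m Sa Sb).Adj (V.R i) (V.F' j) := adjR (by simp) h
lemma adj_RT' {i : Fin (2 ^ m)} {j : Fin m} (h : Nat.testBit i.val j.val = true) :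
    (GS m Sa Sb).Adj (V.R i) (V.T' j) := adjR (by simp) h
lemma adj_Llk1 {i : Fin (2 ^ m)} (h : Sa i = false) :
    (GS m Sa Sb).Adj (V.L i) V.lk1 := adjE (by simp) h
lemma adj_Rrk1 {i : Fin (2 ^ m)} (h : Sb i = false) :
    (GS m Sa Sb).Adj (V.R i) V.rk1 := adjE (by simp) h

open SimpleGraph.Walk

/-- discriminators -/
def isR : V m → Bool
  | V.R _ => true
  | _ => false

def isL : V m → Bool
  | V.L _ => true
  | _ => false

lemma walk_a (hm : 1 ≤ m) (v : V m) (hv : isR v = false) :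
    ∃ p : (GS m Sa Sb).Walk V.a v, p.length ≤ 2 := by
  cases v with
  | L i =>
      rcases h : Nat.testBit i.val 0 with _ | _
      · exact ⟨cons (adj_aF ⟨0, hm⟩) (cons (adj_LF h).symm nil), by simp⟩
      · exact ⟨cons (adj_aT ⟨0, hm⟩) (cons (adj_LT h).symm nil), by simp⟩
  | R i => exact absurd hv (by simp [isR])
  | lk => exact ⟨cons adj_alk nil, by simp⟩
  | lk1 => exact ⟨cons adj_alk1 nil, by simp⟩
  | rk => exact ⟨cons adj_ab (cons adj_brk nil), by simp⟩
  | rk1 => exact ⟨cons adj_ab (cons adj_brk1 nil), by simp⟩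
  | F j => exact ⟨cons (adj_aF j) nil, by simp⟩
  | T j => exact ⟨cons (adj_aT j) nil, by simp⟩
  | F' j => exact ⟨cons (adj_aT j) (cons (adj_TF' j) nil), by simp⟩
  | T' j => exact ⟨cons (adj_aF j) (cons (adj_FT' j) nil), by simp⟩
  | a => exact ⟨nil, by simp⟩
  | b => exact ⟨cons adj_ab nil, by simp⟩

/-- Every vertex other than the `L i` is within distance 2 of `b`. -/
lemma walk_b (hm : 1 ≤ m) (v : V m) (hv : isL v = false) :
    ∃ p : (GS m Sa Sb).Walk V.b v, p.length ≤ 2 := by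
  cases v with
  | R i =>
      rcases h : Nat.testBit i.val 0 with _ | _
      · exact ⟨cons (adj_bF' ⟨0, hm⟩) (cons (adj_RF' h).symm nil), by simp⟩
      · exact ⟨cons (adj_bT' ⟨0, hm⟩) (cons (adj_RT' h).symm nil), by simp⟩
  | L i => exact absurd hv (by simp [isL])
  | rk => exact ⟨cons adj_brk nil, by simp⟩
  | rk1 => exact ⟨cons adj_brk1 nil, by simp⟩
  | lk => exact ⟨cons adj_ab.symm (cons adj_alk nil), by simp⟩
  | lk1 => exact ⟨cons adj_ab.symm (cons adj_alk1 nil), by simp⟩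
  | F' j => exact ⟨cons (adj_bF' j) nil, by simp⟩
  | T' j => exact ⟨cons (adj_bT' j) nil, by simp⟩
  | F j => exact ⟨cons adj_ab.symm (cons (adj_aF j) nil), by simp⟩
  | T j => exact ⟨cons adj_ab.symm (cons (adj_aT j) nil), by simp⟩
  | b => exact ⟨nil, by simp⟩
  | a => exact ⟨cons adj_ab.symm nil, by simp⟩

lemma viaA (hm : 1 ≤ m) {u v : V m} (hu : isR u = false) (hv : isR v = false) :
    (GS m Sa Sb).dist u v ≤ 4 := by
  obtain ⟨p, hp⟩ := walk_a (Sa := Sa) (Sb := Sb) hm u hu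
  obtain ⟨q, hq⟩ := walk_a (Sa := Sa) (Sb := Sb) hm v hv
  have := (GS m Sa Sb).dist_le (p.reverse.append q)
  simp only [SimpleGraph.Walk.length_append, SimpleGraph.Walk.length_reverse] at this
  omega

lemma viaB (hm : 1 ≤ m) {u v : V m} (hu : isL u = false) (hv : isL v = false) :
    (GS m Sa Sb).dist u v ≤ 4 := by
  obtain ⟨p, hp⟩ := walk_b (Sa := Sa) (Sb := Sb) hm u hu
  obtain ⟨q, hq⟩ := walk_b (Sa := Sa) (Sb := Sb) hm v hv
  have := (GS m Sa Sb).dist_le (p.reverse.append q)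
  simp only [SimpleGraph.Walk.length_append, SimpleGraph.Walk.length_reverse] at this
  omega

lemma distLR (hS : ∀ i, Sa i = false ∨ Sb i = false) (i i' : Fin (2 ^ m)) :
    (GS m Sa Sb).dist (V.L i) (V.R i') ≤ 4 := by
  by_cases hii : i = i'
  · subst hii
    rcases hS i with h | h
    · have := (GS m Sa Sb).dist_le
        (cons (adj_Llk1 h) (cons adj_lk1rk1 (cons adj_rkrk1.symm (cons (adj_Rrk i).symm nil))))
      simpa using this
    · have := (GS m Sa Sb).dist_le
        (cons (adj_Llk i) (cons adj_lklk1 (cons adj_lk1rk1 (cons (adj_Rrk1 h).symm nil))))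
      simpa using this
  · have hvne : i.val ≠ i'.val := fun h => hii (Fin.val_injective h)
    obtain ⟨j, hj⟩ := Nat.exists_testBit_ne_of_ne hvne
    have hjm : j < m := by
      by_contra hge
      push_neg at hge
      have h1 : Nat.testBit i.val j = false :=
        Nat.testBit_lt_two_pow (lt_of_lt_of_le i.isLt (Nat.pow_le_pow_right (by norm_num) hge))
      have h2 : Nat.testBit i'.val j = false :=
        Nat.testBit_lt_two_pow (lt_of_lt_of_le i'.isLt (Nat.pow_le_pow_right (by norm_num) hge))
      exact hj (h1.trans h2.symm)
    set J : Fin m := ⟨j, hjm⟩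
    rcases hb : Nat.testBit i.val j with _ | _
    · have hb' : Nat.testBit i'.val j = true := by
        cases h' : Nat.testBit i'.val j with
        | false => exact absurd (hb.trans h'.symm) hj
        | true => rfl
      have := (GS m Sa Sb).dist_le
        (cons (adj_LF (j := J) hb) (cons (adj_FT' J) (cons (adj_RT' (j := J) hb').symm nil)))
      simp at this; omega
    · have hb' : Nat.testBit i'.val j = false := by
        cases h' : Nat.testBit i'.val j with
        | false => rfl
        | true => exact absurd (hb.trans h'.symm) hj
      have := (GS m Sa Sb).dist_le
        (cons (adj_LT (j := J) hb) (cons (adj_TF' J) (cons (adj_RF' (j := J) hb').symm nil)))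
      simp at this; omega

lemma distRL (hS : ∀ i, Sa i = false ∨ Sb i = false) (i i' : Fin (2 ^ m)) :
    (GS m Sa Sb).dist (V.R i) (V.L i') ≤ 4 := by
  rw [SimpleGraph.dist_comm]
  exact distLR hS i' i

lemma dist_le_four (hm : 1 ≤ m) (hS : ∀ i, Sa i = false ∨ Sb i = false) (u v : V m) :
    (GS m Sa Sb).dist u v ≤ 4 := by
  cases u with
  | L i => cases v <;> first | exact viaA hm rfl rfl | exact distLR hS _ _
  | R i => cases v <;> first | exact viaB hm rfl rfl | exact distRL hS _ _
  | lk => cases v <;> first | exact viaA hm rfl rfl | exact viaB hm rfl rfl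
  | lk1 => cases v <;> first | exact viaA hm rfl rfl | exact viaB hm rfl rfl
  | rk => cases v <;> first | exact viaA hm rfl rfl | exact viaB hm rfl rfl
  | rk1 => cases v <;> first | exact viaA hm rfl rfl | exact viaB hm rfl rfl
  | F j => cases v <;> first | exact viaA hm rfl rfl | exact viaB hm rfl rfl
  | T j => cases v <;> first | exact viaA hm rfl rfl | exact viaB hm rfl rfl
  | F' j => cases v <;> first | exact viaA hm rfl rfl | exact viaB hm rfl rfl
  | T' j => cases v <;> first | exact viaA hm rfl rfl | exact viaB hm rfl rfl
  | a => cases v <;> first | exact viaA hm rfl rfl | exact viaB hm rfl rfl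
  | b => cases v <;> first | exact viaA hm rfl rfl | exact viaB hm rfl rfl

/-- Potential function witnessing distance ≥ 5 from `L i` to `R i`. -/
def phi (i : Fin (2 ^ m)) : V m → ℤ
  | V.L i' => if i' = i then 5 else 3
  | V.R i' => if i' = i then 0 else 2
  | V.lk => 4
  | V.lk1 => 3
  | V.rk => 1
  | V.rk1 => 2
  | V.F j => if Nat.testBit i.val j.val = true then 2 else 4
  | V.T j => if Nat.testBit i.val j.val = true then 4 else 2
  | V.F' j => if Nat.testBit i.val j.val = true then 3 else 1
  | V.T' j => if Nat.testBit i.val j.val = true then 1 else 3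
  | V.a => 3
  | V.b => 2

lemma phi_lipschitz (i : Fin (2 ^ m)) (hSa : Sa i = true) (hSb : Sb i = true)
    {u v : V m} (h : (GS m Sa Sb).Adj u v) :
    phi i u ≤ phi i v + 1 ∧ phi i v ≤ phi i u + 1 := by
  simp only [GS, G, SimpleGraph.sup_adj, SimpleGraph.fromRel_adj] at h
  cases u <;> cases v <;>
    simp_all only [rel, extraRel, phi, ne_eq, or_false, false_or, or_self, and_false,
      false_and, and_true, true_and, not_false_eq_true, not_true_eq_false] <;>
    (try subst_vars) <;> (try split_ifs) <;> (try simp_all) <;> omega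

lemma phi_walk (i : Fin (2 ^ m)) (hSa : Sa i = true) (hSb : Sb i = true)
    {u v : V m} (p : (GS m Sa Sb).Walk u v) :
    phi i u ≤ phi i v + p.length := by
  induction p with
  | nil => simp
  | cons h q ih =>
      have h1 := (phi_lipschitz i hSa hSb h).1
      simp only [SimpleGraph.Walk.length_cons] at *
      push_cast at *
      omega

lemma five_le (i : Fin (2 ^ m)) (hSa : Sa i = true) (hSb : Sb i = true) :
    5 ≤ (GS m Sa Sb).dist (V.L i) (V.R i) := by
  have hreach : (GS m Sa Sb).Reachable (V.L i) (V.R i) :=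
    ⟨cons (adj_Llk i) (cons adj_lklk1 (cons adj_lk1rk1
      (cons adj_rkrk1.symm (cons (adj_Rrk i).symm nil))))⟩
  obtain ⟨p, hp⟩ := hreach.exists_walk_length_eq_dist
  have h := phi_walk i hSa hSb p
  have h1 : phi i (V.L i) = 5 := by simp [phi]
  have h2 : phi i (V.R i) = 0 := by simp [phi]
  rw [h1, h2, hp] at h
  omega

end Aux

theorem statement4 (m : ℕ) (hm : 1 ≤ m) (Sa Sb : Fin (2 ^ m) → Bool) :
    ((∃ u v : V m, 5 ≤ (GS m Sa Sb).dist u v) ↔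
      (∃ i : Fin (2 ^ m), Sa i = true ∧ Sb i = true)) ∧
    ((∀ i : Fin (2 ^ m), Sa i = false ∨ Sb i = false) →
      ∀ u v : V m, (GS m Sa Sb).dist u v ≤ 4) := by
  constructor
  · constructor
    · rintro ⟨u, v, h5⟩
      by_contra hne
      have hS : ∀ i, Sa i = false ∨ Sb i = false := by
        intro i
        cases hA : Sa i with
        | false => exact Or.inl rfl
        | true =>
            cases hB : Sb i with
            | false => exact Or.inr rfl
            | true => exact absurd ⟨i, hA, hB⟩ hne
      have := dist_le_four hm hS u v
      omega
    · rintro ⟨i, hA, hB⟩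
      exact ⟨V.L i, V.R i, five_le i hA hB⟩
  · exact fun hS u v => dist_le_four hm hS u v


end DiamGadget
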